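/- Let σ ≤ μ be infinite cardinals with σ regular and μ^{<σ} = μ. Then there exists an array ⟨u^α_ε : ε < μ, α < μ⁺⟩ such that: (1) each u^α_ε ∈ [α]^{<σ}; (2) if β ∈ u^α_ε then u^β_ε = u^α_ε ∩ β; and (3) for every u ∈ [μ⁺]^{<σ} there is ε < μ such that for every β ∈ u, u ∩ β ⊆ u^β_ε. -/

import Mathlib

open Cardinal

universe u

namespace Stmt8

open Set Classical

attribute [local instance] Classical.propDecidable


/-- choose the preimage of `x` under `F α` below `α`, if any -/
noncomputable def pick (F : Ordinal.{u} → Ordinal.{u} → Ordinal.{u}) (α x : Ordinal.{u}) :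
    Ordinal.{u} :=
  if h : ∃ γ, γ < α ∧ F α γ = x then h.choose else α

lemma pick_spec {F : Ordinal.{u} → Ordinal.{u} → Ordinal.{u}} {α x : Ordinal.{u}}
    (h : ∃ γ, γ < α ∧ F α γ = x) : pick F α x < α ∧ F α (pick F α x) = x := by
  rw [pick, dif_pos h]; exact h.choose_spec

variable (F : Ordinal.{u} → Ordinal.{u} → Ordinal.{u})
  (d : Ordinal.{u} → Ordinal.{u} × (Ordinal.{u} → Ordinal.{u} → Ordinal.{u}))

/-- the `j`-th element of the chain reconstructed at `α` at position `i` using code `ε` -/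
noncomputable def bj (α ε i j : Ordinal.{u}) : Ordinal.{u} :=
  pick F α ((d ε).2 i j)

/-- the reconstructed chain -/
noncomputable def chain (α ε i : Ordinal.{u}) : Set Ordinal.{u} :=
  {x | ∃ j < i, bj F d α ε i j = x}

/-- `α` fits at position `i` for code `ε` (relative to already-defined values `rec`) -/
noncomputable def FitF (α ε i : Ordinal.{u})
    (rec : ∀ β : Ordinal.{u}, β < α → Ordinal.{u} → Set Ordinal.{u}) : Prop :=
  i < (d ε).1 ∧
  (∀ j < i, bj F d α ε i j < α ∧ F α (bj F d α ε i j) = (d ε).2 i j) ∧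
  (∀ j < i, ∀ j' < j, bj F d α ε i j' < bj F d α ε i j) ∧
  (∀ j < i, ∀ h : bj F d α ε i j < α,
    rec _ h ε = {x | ∃ j' < j, bj F d α ε i j' = x})

noncomputable def U : Ordinal.{u} → Ordinal.{u} → Set Ordinal.{u} :=
  WellFounded.fix Ordinal.lt_wf (fun α rec ε =>
    if h : ∃ i, IsGreatest {i | FitF F d α ε i rec} i then chain F d α ε h.choose else ∅)

noncomputable def Fit (α ε i : Ordinal.{u}) : Prop :=
  FitF F d α ε i (fun β _ => U F d β)

lemma U_eq (α ε : Ordinal.{u}) :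
    U F d α ε = if h : ∃ i, IsGreatest {i | Fit F d α ε i} i
      then chain F d α ε h.choose else ∅ := by
  have := congrFun (WellFounded.fix_eq Ordinal.lt_wf (fun α rec ε =>
    if h : ∃ i, IsGreatest {i | FitF F d α ε i rec} i then chain F d α ε h.choose else ∅) α) ε
  exact this

lemma U_of_greatest {α ε i : Ordinal.{u}} (h : IsGreatest {i | Fit F d α ε i} i) :
    U F d α ε = chain F d α ε i := by
  rw [U_eq]
  have hex : ∃ i, IsGreatest {i | Fit F d α ε i} i := ⟨i, h⟩
  rw [dif_pos hex, IsGreatest.unique hex.choose_spec h]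

lemma U_of_not_greatest {α ε : Ordinal.{u}}
    (h : ¬ ∃ i, IsGreatest {i | Fit F d α ε i} i) : U F d α ε = ∅ := by
  rw [U_eq, dif_neg h]


lemma Fit_of_greatest {α ε i : Ordinal.{u}} (h : IsGreatest {i | Fit F d α ε i} i) :
    Fit F d α ε i := h.1

lemma U_subset (α ε : Ordinal.{u}) : U F d α ε ⊆ Set.Iio α := by
  rw [U_eq]
  split_ifs with h
  · rintro x ⟨j, hj, rfl⟩
    exact (h.choose_spec.1.2.1 j hj).1
  · simp

lemma U_card {σ : Cardinal.{u}} (hσ : ℵ₀ ≤ σ) (α ε : Ordinal.{u})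
    (hδ : (d ε).1 < σ.ord) : #(U F d α ε) < Cardinal.lift.{u + 1} σ := by
  rw [U_eq]
  split_ifs with h
  · have hfit := h.choose_spec.1
    have hchain : chain F d α ε h.choose = (bj F d α ε h.choose) '' (Set.Iio h.choose) := by
      ext x
      simp only [chain, Set.mem_image, Set.mem_Iio, Set.mem_setOf_eq]
    rw [hchain]
    calc #((bj F d α ε h.choose) '' (Set.Iio h.choose)) ≤ #(Set.Iio h.choose) :=
          Cardinal.mk_image_le
      _ = Cardinal.lift.{u + 1} (h.choose).card := Ordinal.mk_Iio_ordinal _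
      _ < Cardinal.lift.{u + 1} σ := by
          rw [Cardinal.lift_lt]
          exact Cardinal.lt_ord.1 (hfit.1.trans hδ)
  · simp only [Cardinal.mk_emptyCollection]
    simpa using aleph0_pos.trans_le hσ

lemma U_coh {α ε β : Ordinal.{u}} (hβ : β ∈ U F d α ε) :
    U F d β ε = U F d α ε ∩ Set.Iio β := by
  rw [U_eq F d α ε] at hβ ⊢
  split_ifs at hβ ⊢ with h
  swap
  · exact absurd hβ (by simp)
  obtain ⟨j₀, hj₀, hbj₀⟩ := hβ
  set i := h.choose with hi
  have hfit : Fit F d α ε i := h.choose_spec.1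
  have hβα : bj F d α ε i j₀ < α := (hfit.2.1 j₀ hj₀).1
  have hUβ : U F d (bj F d α ε i j₀) ε = {x | ∃ j' < j₀, bj F d α ε i j' = x} :=
    hfit.2.2.2 j₀ hj₀ hβα
  rw [← hbj₀, hUβ]
  ext x
  simp only [chain, Set.mem_setOf_eq, Set.mem_inter_iff, Set.mem_Iio]
  constructor
  · rintro ⟨j', hj', rfl⟩
    exact ⟨⟨j', hj'.trans hj₀, rfl⟩, hfit.2.2.1 j₀ hj₀ j' hj'⟩
  · rintro ⟨⟨j, hj, rfl⟩, hlt⟩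
    refine ⟨j, ?_, rfl⟩
    by_contra hjj
    push_neg at hjj
    rcases eq_or_lt_of_le hjj with rfl | hjj'
    · exact absurd hlt (lt_irrefl _)
    · exact absurd (hfit.2.2.1 j hj j₀ hjj') (fun hc => absurd (hlt.trans hc) (lt_irrefl _))


lemma exists_pr {μ : Cardinal.{u}} (hμ : ℵ₀ ≤ μ) :
    ∃ pr : Ordinal.{u} → Ordinal.{u} → Ordinal.{u},
      (∀ x < μ.ord, ∀ y < μ.ord, pr x y < μ.ord) ∧
      (∀ x x' y y', x < μ.ord → x' < μ.ord → y < μ.ord → y' < μ.ord →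
        pr x y = pr x' y' → x = x' ∧ y = y') := by
  have hmk : #(Set.Iio μ.ord × Set.Iio μ.ord) = #(Set.Iio μ.ord) := by
    rw [Cardinal.mk_prod, Cardinal.lift_id, Ordinal.mk_Iio_ordinal, Cardinal.card_ord]
    exact Cardinal.mul_eq_self (Cardinal.aleph0_le_lift.2 hμ)
  obtain ⟨e⟩ := Cardinal.eq.1 hmk
  refine ⟨fun x y => if hx : x < μ.ord then if hy : y < μ.ord then
      (e (⟨x, hx⟩, ⟨y, hy⟩)).val else 0 else 0, ?_, ?_⟩
  · intro x hx y hy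
    simp only [dif_pos hx, dif_pos hy]
    exact (e (⟨x, hx⟩, ⟨y, hy⟩)).2
  · intro x x' y y' hx hx' hy hy' heq
    simp only [dif_pos hx, dif_pos hy, dif_pos hx', dif_pos hy'] at heq
    have := e.injective (Subtype.ext heq)
    exact ⟨congrArg (fun p => (p.1 : Ordinal)) this, congrArg (fun p => (p.2 : Ordinal)) this⟩

lemma exists_ebd {μ : Cardinal.{u}} (β : Ordinal.{u}) :
    ∃ eb : Ordinal.{u} → Ordinal.{u},
      β < (Order.succ μ).ord →
      ((∀ γ < β, eb γ < μ.ord) ∧ Set.InjOn eb (Set.Iio β)) := by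
  by_cases hβ : β < (Order.succ μ).ord
  swap
  · exact ⟨fun _ => 0, fun h => absurd h hβ⟩
  have hcard : β.card ≤ μ := Order.lt_succ_iff.1 (Cardinal.lt_ord.1 hβ)
  have hmk : #(Set.Iio β) ≤ #(Set.Iio μ.ord) := by
    rw [Ordinal.mk_Iio_ordinal, Ordinal.mk_Iio_ordinal, Cardinal.lift_le, Cardinal.card_ord]
    exact hcard
  obtain ⟨f⟩ := (Cardinal.le_def _ _).1 hmk
  refine ⟨fun γ => if h : γ < β then (f ⟨γ, h⟩).val else 0, fun _ => ⟨?_, ?_⟩⟩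
  · intro γ hγ
    simp only [dif_pos hγ]
    exact (f ⟨γ, hγ⟩).2
  · intro x hx y hy heq
    rw [Set.mem_Iio] at hx hy
    simp only [dif_pos hx, dif_pos hy] at heq
    exact congrArg Subtype.val (f.injective (Subtype.ext heq))

lemma exists_F {μ : Cardinal.{u}} (hμ : ℵ₀ ≤ μ) :
    ∃ F : Ordinal.{u} → Ordinal.{u} → Ordinal.{u},
      (∀ β < (Order.succ μ).ord, ∀ γ < β, F β γ < μ.ord) ∧
      (∀ β < (Order.succ μ).ord, Set.InjOn (F β) (Set.Iio β)) ∧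
      (∀ β < (Order.succ μ).ord, ∀ γ < β, F β γ ∉ F γ '' (Set.Iio γ)) := by
  obtain ⟨pr, hpr1, hpr2⟩ := exists_pr hμ
  choose eb heb using exists_ebd (μ := μ)
  have h0 : (0 : Ordinal.{u}) < μ.ord := by
    rw [Cardinal.lt_ord]
    simpa using aleph0_pos.trans_le hμ
  have h1 : (1 : Ordinal.{u}) < μ.ord := by
    rw [Cardinal.lt_ord]
    simpa using one_lt_aleph0.trans_le hμ
  set F : Ordinal.{u} → Ordinal.{u} → Ordinal.{u} :=
    WellFounded.fix Ordinal.lt_wf (fun β rec => fun γ =>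
      if h : γ < β then
        (if ∃ δ < γ, rec γ h δ = pr (eb β γ) 0 then pr (eb β γ) 1 else pr (eb β γ) 0)
      else 0) with hF
  have F_eq : ∀ β γ : Ordinal.{u}, F β γ =
      if h : γ < β then
        (if ∃ δ < γ, F γ δ = pr (eb β γ) 0 then pr (eb β γ) 1 else pr (eb β γ) 0)
      else 0 := by
    intro β γ
    conv_lhs => rw [hF, WellFounded.fix_eq]
  have F_form : ∀ β γ : Ordinal.{u}, γ < β →
      F β γ = pr (eb β γ) 0 ∨ F β γ = pr (eb β γ) 1 := by
    intro β γ h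
    rw [F_eq β γ, dif_pos h]
    split_ifs with h'
    · exact Or.inr rfl
    · exact Or.inl rfl
  have F_lt : ∀ β < (Order.succ μ).ord, ∀ γ < β, F β γ < μ.ord := by
    intro β hβ γ hγ
    have hx : eb β γ < μ.ord := (heb β hβ).1 γ hγ
    rcases F_form β γ hγ with h | h <;> rw [h]
    · exact hpr1 _ hx _ h0
    · exact hpr1 _ hx _ h1
  refine ⟨F, F_lt, ?_, ?_⟩
  · intro β hβ x hx y hy heq
    rw [Set.mem_Iio] at hx hy
    have hxμ : eb β x < μ.ord := (heb β hβ).1 x hx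
    have hyμ : eb β y < μ.ord := (heb β hβ).1 y hy
    have hxy : eb β x = eb β y := by
      rcases F_form β x hx with h | h <;> rcases F_form β y hy with h' | h' <;>
        rw [h, h'] at heq
      · exact (hpr2 _ _ _ _ hxμ hyμ h0 h0 heq).1
      · exact (hpr2 _ _ _ _ hxμ hyμ h0 h1 heq).1
      · exact (hpr2 _ _ _ _ hxμ hyμ h1 h0 heq).1
      · exact (hpr2 _ _ _ _ hxμ hyμ h1 h1 heq).1
    exact (heb β hβ).2 hx hy hxy
  · intro β hβ γ hγ hmem
    have hγκ : γ < (Order.succ μ).ord := hγ.trans hβ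
    obtain ⟨δ1, hδ1, hFδ1⟩ := by
      simpa only [Set.mem_image, Set.mem_Iio] using hmem
    have hxμ : eb β γ < μ.ord := (heb β hβ).1 γ hγ
    rw [F_eq β γ, dif_pos hγ] at hFδ1
    split_ifs at hFδ1 with hcase
    · -- F β γ = pr x 1, and pr x 0 also in range of F γ
      obtain ⟨δ0, hδ0, hFδ0⟩ := hcase
      have hδ0μ : eb γ δ0 < μ.ord := (heb γ hγκ).1 δ0 hδ0
      have hδ1μ : eb γ δ1 < μ.ord := (heb γ hγκ).1 δ1 hδ1
      have e0 : eb γ δ0 = eb β γ := by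
        rcases F_form γ δ0 hδ0 with h | h <;> rw [h] at hFδ0
        · exact (hpr2 _ _ _ _ hδ0μ hxμ h0 h0 hFδ0).1
        · exact absurd (hpr2 _ _ _ _ hδ0μ hxμ h1 h0 hFδ0).2 (by simp)
      have e1 : eb γ δ1 = eb β γ := by
        rcases F_form γ δ1 hδ1 with h | h <;> rw [h] at hFδ1
        · exact absurd (hpr2 _ _ _ _ hδ1μ hxμ h0 h1 hFδ1).2 (by simp)
        · exact (hpr2 _ _ _ _ hδ1μ hxμ h1 h1 hFδ1).1
      have : δ0 = δ1 := (heb γ hγκ).2 (Set.mem_Iio.2 hδ0) (Set.mem_Iio.2 hδ1)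
        (e0.trans e1.symm)
      rw [this, hFδ1] at hFδ0
      have := (hpr2 _ _ _ _ hxμ hxμ h0 h1 hFδ0.symm).2
      simp at this
    · exact hcase ⟨δ1, hδ1, hFδ1⟩


/-- validity of a code: a pair (order type, matrix of values) -/
def Valid (sig mu : Cardinal.{u}) (p : Ordinal.{u} × (Ordinal.{u} → Ordinal.{u} → Ordinal.{u})) :
    Prop :=
  p.1 < sig.ord ∧ (∀ i j, j < i → i < p.1 → p.2 i j < mu.ord) ∧
    (∀ i j, ¬ (j < i ∧ i < p.1) → p.2 i j = 0)

lemma exists_decode {σ μ : Cardinal.{u}} (hσ : ℵ₀ ≤ σ) (hσμ : σ ≤ μ)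
    (hpow : μ ^< σ = μ) :
    ∃ d : Ordinal.{u} → Ordinal.{u} × (Ordinal.{u} → Ordinal.{u} → Ordinal.{u}),
      (∀ ε, Valid σ μ (d ε)) ∧ (∀ p, Valid σ μ p → ∃ ε < μ.ord, d ε = p) := by
  have hμ : ℵ₀ ≤ μ := hσ.trans hσμ
  have hμ0 : (0 : Ordinal.{u}) < μ.ord := by
    rw [Cardinal.lt_ord]; simpa using aleph0_pos.trans_le hμ
  have hσ0 : (0 : Ordinal.{u}) < σ.ord := by
    rw [Cardinal.lt_ord]; simpa using aleph0_pos.trans_le hσ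
  set T := {p : Ordinal.{u} × (Ordinal.{u} → Ordinal.{u} → Ordinal.{u}) // Valid σ μ p}
    with hT
  -- the default code
  have hp₀ : Valid σ μ ((0 : Ordinal.{u}), fun _ _ => (0 : Ordinal.{u})) := by
    refine ⟨hσ0, ?_, fun _ _ _ => rfl⟩
    intro i j _ hi
    exact absurd hi (by simp)
  -- the embedding into a sigma type
  set Φ : T → Σ δ : Set.Iio σ.ord, (Set.Iio δ.1 → Set.Iio δ.1 → Set.Iio μ.ord) :=
    fun t => ⟨⟨t.1.1, t.2.1⟩, fun i j => ⟨t.1.2 i.1 j.1, by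
      by_cases hij : j.1 < i.1
      · exact t.2.2.1 i.1 j.1 hij i.2
      · rw [t.2.2.2 i.1 j.1 (fun hc => hij hc.1)]; exact hμ0⟩⟩ with hΦ
  have hΦinj : Function.Injective Φ := by
    rintro ⟨⟨δ, g⟩, hv⟩ ⟨⟨δ', g'⟩, hv'⟩ heq
    have hδ : δ = δ' := by
      have := congrArg (fun z => z.1.1) heq
      simpa [hΦ] using this
    subst hδ
    have hsnd := eq_of_heq (Sigma.ext_iff.1 heq).2
    refine Subtype.ext (Prod.ext rfl ?_)
    funext i j
    by_cases hij : j < i ∧ i < δ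
    · have hj : j < δ := hij.1.trans hij.2
      have h3 := congrFun (congrFun hsnd ⟨i, hij.2⟩) ⟨j, hj⟩
      simpa [hΦ] using congrArg Subtype.val h3
    · rw [hv.2.2 i j hij, hv'.2.2 i j hij]
  have hTle : #T ≤ #(Set.Iio μ.ord) := by
    have h1 : #T ≤ #(Σ δ : Set.Iio σ.ord, (Set.Iio δ.1 → Set.Iio δ.1 → Set.Iio μ.ord)) :=
      Cardinal.mk_le_of_injective hΦinj
    have h2 : ∀ δ : Set.Iio σ.ord,
        #(Set.Iio δ.1 → Set.Iio δ.1 → Set.Iio μ.ord) ≤ Cardinal.lift.{u + 1} μ := by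
      intro δ
      have hcard : δ.1.card < σ := Cardinal.lt_ord.1 δ.2
      have hcc : δ.1.card * δ.1.card < σ := Cardinal.mul_lt_of_lt hσ hcard hcard
      have hpow' : μ ^ (δ.1.card * δ.1.card) ≤ μ :=
        le_of_le_of_eq (Cardinal.le_powerlt μ hcc) hpow
      calc #(Set.Iio δ.1 → Set.Iio δ.1 → Set.Iio μ.ord)
          = (#(Set.Iio μ.ord) ^ #(Set.Iio δ.1)) ^ #(Set.Iio δ.1) := by
            rw [← Cardinal.power_def, ← Cardinal.power_def]
        _ = Cardinal.lift.{u + 1} (μ ^ (δ.1.card * δ.1.card)) := by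
            rw [Ordinal.mk_Iio_ordinal, Ordinal.mk_Iio_ordinal, Cardinal.card_ord,
              Cardinal.power_mul, Cardinal.lift_power, Cardinal.lift_power]
        _ ≤ Cardinal.lift.{u + 1} μ := Cardinal.lift_le.2 hpow'
    calc #T ≤ #(Σ δ : Set.Iio σ.ord, (Set.Iio δ.1 → Set.Iio δ.1 → Set.Iio μ.ord)) := h1
      _ = Cardinal.sum (fun δ : Set.Iio σ.ord =>
            #(Set.Iio δ.1 → Set.Iio δ.1 → Set.Iio μ.ord)) := Cardinal.mk_sigma _
      _ ≤ Cardinal.sum (fun _ : Set.Iio σ.ord => Cardinal.lift.{u + 1} μ) :=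
            Cardinal.sum_le_sum _ _ h2
      _ = #(Set.Iio σ.ord) * Cardinal.lift.{u + 1} μ := Cardinal.sum_const' _ _
      _ = Cardinal.lift.{u + 1} σ * Cardinal.lift.{u + 1} μ := by
            rw [Ordinal.mk_Iio_ordinal, Cardinal.card_ord]
      _ = Cardinal.lift.{u + 1} (σ * μ) := (Cardinal.lift_mul _ _).symm
      _ = #(Set.Iio μ.ord) := by
            rw [Cardinal.mul_eq_right hμ hσμ (aleph0_pos.trans_le hσ).ne', Ordinal.mk_Iio_ordinal,
              Cardinal.card_ord]
  rw [Cardinal.le_def] at hTle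
  obtain ⟨emb⟩ := hTle
  refine ⟨fun ε => if h : ∃ t : T, ((emb t).val = ε) then h.choose.val else
    ((0 : Ordinal.{u}), fun _ _ => (0 : Ordinal.{u})), ?_, ?_⟩
  · intro ε
    dsimp only
    split_ifs with h
    · exact h.choose.property
    · exact hp₀
  · intro p hp
    set t : T := ⟨p, hp⟩ with ht
    have hex : ∃ t' : T, ((emb t').val = (emb t).val) := ⟨t, rfl⟩
    refine ⟨(emb t).val, (emb t).property, ?_⟩
    dsimp only
    rw [dif_pos hex]
    have : hex.choose = t := emb.injective (Subtype.ext hex.choose_spec)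
    rw [this]

end Stmt8

/-- For `σ ≤ μ` with `σ` regular and `μ^{<σ} = μ`, there is a coherent array
`⟨u^α_ε : ε < μ, α < μ⁺⟩` of sets in `[α]^{<σ}` covering all sets in `[μ⁺]^{<σ}`. -/
theorem stmt_8 (σ μ : Cardinal.{u}) (hσ : ℵ₀ ≤ σ) (hσμ : σ ≤ μ)
    (hreg : σ.IsRegular) (hpow : μ ^< σ = μ) :
    ∃ U : Ordinal.{u} → Ordinal.{u} → Set Ordinal.{u},
      (∀ α < (Order.succ μ).ord, ∀ ε < μ.ord,
        U α ε ⊆ Set.Iio α ∧ #↥(U α ε) < Cardinal.lift.{u + 1} σ) ∧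
      (∀ α < (Order.succ μ).ord, ∀ ε < μ.ord, ∀ β ∈ U α ε,
        U β ε = U α ε ∩ Set.Iio β) ∧
      (∀ s : Set Ordinal.{u}, s ⊆ Set.Iio (Order.succ μ).ord →
        #↥s < Cardinal.lift.{u + 1} σ →
        ∃ ε < μ.ord, ∀ β ∈ s, s ∩ Set.Iio β ⊆ U β ε) := by
  classical
  obtain ⟨F, hF1, hF2, hF3⟩ := Stmt8.exists_F (μ := μ) (hσ.trans hσμ)
  obtain ⟨d, hd1, hd2⟩ := Stmt8.exists_decode hσ hσμ hpow
  refine ⟨Stmt8.U F d, ?_, ?_, ?_⟩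
  · intro α _ ε _
    exact ⟨Stmt8.U_subset F d α ε, Stmt8.U_card F d hσ α ε (hd1 ε).1⟩
  · intro α _ ε _ β hβ
    exact Stmt8.U_coh F d hβ
  · intro s hs hcard
    set κ := (Order.succ μ).ord with hκ
    set J := (Ordinal.ToType.mk : Set.Iio κ ≃o κ.ToType) with hJ
    set s' : Set κ.ToType := {x | ((J.symm x : Set.Iio κ) : Ordinal.{u}) ∈ s} with hs'
    haveI hwos' : IsWellOrder ↥s' (· < ·) := inferInstance
    set δ := Ordinal.type ((· < ·) : ↥s' → ↥s' → Prop) with hδdef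
    set e : Ordinal.{u} → Ordinal.{u} := fun j =>
      if h : j < δ then
        ((J.symm ((Ordinal.enum (· < ·) ⟨j, h⟩ : ↥s') : κ.ToType) : Set.Iio κ) : Ordinal.{u})
      else 0 with he
    have he_mem : ∀ j, ∀ h : j < δ, e j ∈ s := by
      intro j h
      simp only [he, dif_pos h]
      exact (Ordinal.enum (· < ·) ⟨j, h⟩ : ↥s').2
    have he_κ : ∀ j, ∀ h : j < δ, e j < κ := by
      intro j h
      simp only [he, dif_pos h]
      exact ((J.symm ((Ordinal.enum (· < ·) ⟨j, h⟩ : ↥s') : κ.ToType)) : Set.Iio κ).2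
    have he_mono : ∀ j' j, j' < j → j < δ → e j' < e j := by
      intro j' j hj' hj
      have hj'δ : j' < δ := hj'.trans hj
      simp only [he, dif_pos hj, dif_pos hj'δ]
      have h1 : (Ordinal.enum (· < ·) ⟨j', hj'δ⟩ : ↥s') < Ordinal.enum (· < ·) ⟨j, hj⟩ :=
        Ordinal.enum_lt_enum.2 (Subtype.mk_lt_mk.2 hj')
      have h2 : ((Ordinal.enum (· < ·) ⟨j', hj'δ⟩ : ↥s') : κ.ToType) <
          ((Ordinal.enum (· < ·) ⟨j, hj⟩ : ↥s') : κ.ToType) := h1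
      exact Subtype.coe_lt_coe.2 (J.symm.strictMono h2)
    have he_surj : ∀ β ∈ s, ∃ j, ∃ h : j < δ, e j = β := by
      intro β hβ
      have hβκ : β < κ := hs hβ
      have hxs' : (J ⟨β, hβκ⟩ : κ.ToType) ∈ s' := by
        simp only [hs', Set.mem_setOf_eq, OrderIso.symm_apply_apply]
        exact hβ
      set x : ↥s' := ⟨J ⟨β, hβκ⟩, hxs'⟩ with hx
      refine ⟨Ordinal.typein (· < ·) x, Ordinal.typein_lt_type _ x, ?_⟩
      have hlt : Ordinal.typein (α := ↥s') (· < ·) x < δ := Ordinal.typein_lt_type _ x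
      have hen : (Ordinal.enum (α := ↥s') (· < ·) ⟨Ordinal.typein (· < ·) x, hlt⟩) = x :=
        Ordinal.enum_typein _ x
      simp only [he, dif_pos hlt]
      rw [hen]
      simp only [hx, OrderIso.symm_apply_apply]
    have hδσ : δ < σ.ord := by
      have hΨ : ↥s' ≃ ↥s := by
        refine ⟨fun x => ⟨((J.symm x.1 : Set.Iio κ) : Ordinal.{u}), x.2⟩,
          fun y => ⟨J ⟨y.1, hs y.2⟩, by
            simp only [hs', Set.mem_setOf_eq, OrderIso.symm_apply_apply]; exact y.2⟩,
          ?_, ?_⟩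
        · intro x
          apply Subtype.ext
          simp only
          rw [Subtype.coe_eta, OrderIso.apply_symm_apply]
        · intro y
          apply Subtype.ext
          simp only [OrderIso.symm_apply_apply]
      have hlift : Cardinal.lift.{u + 1} #↥s' = #↥s := by
        have := Cardinal.lift_mk_eq'.{u, u + 1}.2 ⟨hΨ⟩
        rwa [Cardinal.lift_id'.{u, u + 1}] at this
      have hs'σ : #↥s' < σ := by
        have h2 : Cardinal.lift.{u + 1} #↥s' < Cardinal.lift.{u + 1} σ := by
          rw [hlift]; exact hcard
        exact Cardinal.lift_lt.1 h2
      rw [Cardinal.lt_ord, hδdef, Ordinal.card_type]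
      exact hs'σ
    set g : Ordinal.{u} → Ordinal.{u} → Ordinal.{u} := fun i j =>
      if j < i ∧ i < δ then F (e i) (e j) else 0 with hg
    have hvalid : Stmt8.Valid σ μ (δ, g) := by
      refine ⟨hδσ, ?_, ?_⟩
      · intro i j hji hi
        simp only [hg]
        rw [if_pos ⟨hji, hi⟩]
        exact hF1 (e i) (he_κ i hi) (e j) (he_mono j i hji hi)
      · intro i j hij
        simp only [hg]
        rw [if_neg hij]
    obtain ⟨ε, hεμ, hdε⟩ := hd2 (δ, g) hvalid
    have hd1' : (d ε).1 = δ := by rw [hdε]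
    have hd2' : (d ε).2 = g := by rw [hdε]
    have hbj : ∀ i, i < δ → ∀ j, j < i → Stmt8.bj F d (e i) ε i j = e j := by
      intro i hi j hj
      have hgij : (d ε).2 i j = F (e i) (e j) := by
        rw [hd2']
        simp only [hg]
        rw [if_pos ⟨hj, hi⟩]
      rw [Stmt8.bj, hgij]
      have hex : ∃ γ, γ < e i ∧ F (e i) γ = F (e i) (e j) :=
        ⟨e j, he_mono j i hj hi, rfl⟩
      obtain ⟨hlt, heq⟩ := Stmt8.pick_spec hex
      exact hF2 (e i) (he_κ i hi) (Set.mem_Iio.2 hlt)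
        (Set.mem_Iio.2 (he_mono j i hj hi)) heq
    have hind : ∀ i, i < δ → Stmt8.U F d (e i) ε = {x | ∃ j < i, e j = x} := by
      intro i
      induction i using Ordinal.induction with
      | _ i IH =>
      intro hi
      have hfit : Stmt8.Fit F d (e i) ε i := by
        refine ⟨?_, ?_, ?_, ?_⟩
        · rw [hd1']; exact hi
        · intro j hj
          rw [hbj i hi j hj]
          refine ⟨he_mono j i hj hi, ?_⟩
          rw [hd2']
          simp only [hg]
          rw [if_pos ⟨hj, hi⟩]
        · intro j hj j' hj'
          rw [hbj i hi j hj, hbj i hi j' (hj'.trans hj)]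
          exact he_mono j' j hj' (hj.trans hi)
        · intro j hj h
          show Stmt8.U F d (Stmt8.bj F d (e i) ε i j) ε = _
          rw [hbj i hi j hj, IH j hj (hj.trans hi)]
          ext x
          simp only [Set.mem_setOf_eq]
          constructor
          · rintro ⟨j', hj', rfl⟩
            exact ⟨j', hj', hbj i hi j' (hj'.trans hj)⟩
          · rintro ⟨j', hj', rfl⟩
            exact ⟨j', hj', (hbj i hi j' (hj'.trans hj)).symm⟩
      have hub : ∀ i' ∈ {i' | Stmt8.Fit F d (e i) ε i'}, i' ≤ i := by
        intro i' hfit'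
        by_contra hii
        push_neg at hii
        have hi'δ : i' < δ := by
          have h1 := hfit'.1
          rwa [hd1'] at h1
        have hA := hfit'.2.1 i hii
        have hgi : (d ε).2 i' i = F (e i') (e i) := by
          rw [hd2']
          simp only [hg]
          rw [if_pos ⟨hii, hi'δ⟩]
        have hmem : F (e i') (e i) ∈ F (e i) '' (Set.Iio (e i)) :=
          ⟨Stmt8.bj F d (e i) ε i' i, Set.mem_Iio.2 hA.1, by rw [hA.2, hgi]⟩
        exact hF3 (e i') (he_κ i' hi'δ) (e i) (he_mono i i' hii hi'δ) hmem
      have hgr : IsGreatest {i' | Stmt8.Fit F d (e i) ε i'} i := ⟨hfit, hub⟩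
      rw [Stmt8.U_of_greatest F d hgr]
      ext x
      simp only [Stmt8.chain, Set.mem_setOf_eq]
      constructor
      · rintro ⟨j, hj, rfl⟩
        exact ⟨j, hj, (hbj i hi j hj).symm⟩
      · rintro ⟨j, hj, rfl⟩
        exact ⟨j, hj, hbj i hi j hj⟩
    refine ⟨ε, hεμ, ?_⟩
    intro β hβ
    obtain ⟨i, hi, rfl⟩ := he_surj β hβ
    rw [hind i hi]
    rintro x ⟨hxs, hxlt⟩
    obtain ⟨j, hj, rfl⟩ := he_surj x hxs
    refine ⟨j, ?_, rfl⟩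
    by_contra hji
    push_neg at hji
    rcases eq_or_lt_of_le hji with rfl | hij
    · exact absurd (Set.mem_Iio.1 hxlt) (lt_irrefl _)
    · exact absurd (he_mono i j hij hj) (not_lt.2 (le_of_lt (Set.mem_Iio.1 hxlt)))
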